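/- Let r > 0 be a real number such that the set S = { z ∈ ℤ² \ {0} : ‖z‖₂ < r } is nonempty. Then card{ z ∈ ℤ² \ {0} : ‖z‖₂ ≤ r } ≤ 2 · card S. -/
import Mathlib

private def Fm (z : ℤ × ℤ) : ℤ × ℤ :=
  if 1 ≤ z.1 then
    (if 1 ≤ z.2 then (z.1, z.2 - 1) else if z.2 = 0 then (z.1 - 1, 0) else (z.1 - 1, z.2))
  else if z.1 = 0 then (if 1 ≤ z.2 then (0, z.2 - 1) else (0, z.2 + 1))
  else (if 1 ≤ z.2 then (z.1 + 1, z.2) else if z.2 = 0 then (z.1 + 1, 0) else (z.1, z.2 + 1))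

private lemma Fm_norm_lt {N : ℤ} (hN : 2 ≤ N) {z : ℤ × ℤ} (hz : z.1 ^ 2 + z.2 ^ 2 = N) :
    (Fm z).1 ^ 2 + (Fm z).2 ^ 2 < N := by
  obtain ⟨a, b⟩ := z
  simp only at hz
  simp only [Fm]
  split_ifs <;> dsimp only <;>
    first
      | nlinarith
      | (have ha : a ≤ -1 := by omega
         nlinarith)
      | (have hb : b ≤ -1 := by omega
         nlinarith)

private lemma Fm_ne_zero {N : ℤ} (hN : 2 ≤ N) {z : ℤ × ℤ} (hz : z.1 ^ 2 + z.2 ^ 2 = N) :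
    Fm z ≠ 0 := by
  obtain ⟨a, b⟩ := z
  simp only at hz
  intro h0
  simp only [Fm] at h0
  split_ifs at h0 <;>
    (rw [Prod.ext_iff] at h0
     simp only [Prod.fst_zero, Prod.snd_zero] at h0
     obtain ⟨h1, h2⟩ := h0) <;>
    first
      | omega
      | nlinarith

set_option maxHeartbeats 2000000 in
private lemma Fm_inj {N : ℤ} (hN : 2 ≤ N) {z w : ℤ × ℤ} (hz : z.1 ^ 2 + z.2 ^ 2 = N)
    (hw : w.1 ^ 2 + w.2 ^ 2 = N) (h : Fm z = Fm w) : z = w := by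
  obtain ⟨a, b⟩ := z
  obtain ⟨c, d⟩ := w
  simp only at hz hw
  simp only [Fm] at h
  rw [Prod.mk.injEq]
  split_ifs at h <;>
    (rw [Prod.mk.injEq] at h
     obtain ⟨h1, h2⟩ := h) <;>
    (try have ha : a ≤ -1 := by omega) <;>
    (try have hb : b ≤ -1 := by omega) <;>
    (try have hc : c ≤ -1 := by omega) <;>
    (try have hd : d ≤ -1 := by omega) <;>
    first
      | omega
      | (exfalso; nlinarith)

/-- If the punctured open disc of radius `r` contains a nonzero lattice point, then the
punctured closed disc of radius `r` contains at most twice as many lattice points as the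
punctured open disc. -/
theorem stmt_11 (r : ℝ) (hr : 0 < r)
    (hne : {z : ℤ × ℤ | z ≠ 0 ∧ Real.sqrt ((z.1 : ℝ) ^ 2 + (z.2 : ℝ) ^ 2) < r}.Nonempty) :
    Set.ncard {z : ℤ × ℤ | z ≠ 0 ∧ Real.sqrt ((z.1 : ℝ) ^ 2 + (z.2 : ℝ) ^ 2) ≤ r}
      ≤ 2 * Set.ncard {z : ℤ × ℤ | z ≠ 0 ∧ Real.sqrt ((z.1 : ℝ) ^ 2 + (z.2 : ℝ) ^ 2) < r} := by
  set O := {z : ℤ × ℤ | z ≠ 0 ∧ Real.sqrt ((z.1 : ℝ) ^ 2 + (z.2 : ℝ) ^ 2) < r} with hO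
  set C := {z : ℤ × ℤ | z ≠ 0 ∧ Real.sqrt ((z.1 : ℝ) ^ 2 + (z.2 : ℝ) ^ 2) ≤ r} with hC
  have hCfin : C.Finite := by
    apply Set.Finite.subset (Set.finite_Icc ((-⌈r⌉, -⌈r⌉) : ℤ × ℤ) (⌈r⌉, ⌈r⌉))
    rintro ⟨a, b⟩ ⟨-, hle⟩
    have h1 : |(a : ℝ)| ≤ r := by
      have h2 : Real.sqrt ((a : ℝ) ^ 2) ≤ Real.sqrt ((a : ℝ) ^ 2 + (b : ℝ) ^ 2) :=
        Real.sqrt_le_sqrt (by nlinarith [sq_nonneg (b : ℝ)])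
      rw [Real.sqrt_sq_eq_abs] at h2
      exact h2.trans hle
    have h1' : |(b : ℝ)| ≤ r := by
      have h2 : Real.sqrt ((b : ℝ) ^ 2) ≤ Real.sqrt ((a : ℝ) ^ 2 + (b : ℝ) ^ 2) :=
        Real.sqrt_le_sqrt (by nlinarith [sq_nonneg (a : ℝ)])
      rw [Real.sqrt_sq_eq_abs] at h2
      exact h2.trans hle
    rw [abs_le] at h1 h1'
    have hceil : r ≤ (⌈r⌉ : ℝ) := Int.le_ceil r
    have c1 : -⌈r⌉ ≤ a := by
      have : ((-⌈r⌉ : ℤ) : ℝ) ≤ (a : ℝ) := by push_cast; linarith [h1.1]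
      exact_mod_cast this
    have c2 : a ≤ ⌈r⌉ := by
      have : (a : ℝ) ≤ ((⌈r⌉ : ℤ) : ℝ) := by push_cast; linarith [h1.2]
      exact_mod_cast this
    have c3 : -⌈r⌉ ≤ b := by
      have : ((-⌈r⌉ : ℤ) : ℝ) ≤ (b : ℝ) := by push_cast; linarith [h1'.1]
      exact_mod_cast this
    have c4 : b ≤ ⌈r⌉ := by
      have : (b : ℝ) ≤ ((⌈r⌉ : ℤ) : ℝ) := by push_cast; linarith [h1'.2]
      exact_mod_cast this
    exact Set.mem_Icc.mpr ⟨Prod.mk_le_mk.mpr ⟨c1, c3⟩, Prod.mk_le_mk.mpr ⟨c2, c4⟩⟩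
  have hOsub : O ⊆ C := fun z hz => ⟨hz.1, hz.2.le⟩
  have hOfin : O.Finite := hCfin.subset hOsub
  set B := {z : ℤ × ℤ | z ≠ 0 ∧ Real.sqrt ((z.1 : ℝ) ^ 2 + (z.2 : ℝ) ^ 2) = r} with hB
  have hBfin : B.Finite := hCfin.subset (fun z hz => ⟨hz.1, hz.2.le⟩)
  have hCsub : C ⊆ O ∪ B := by
    rintro z ⟨h0, hle⟩
    rcases lt_or_eq_of_le hle with h | h
    · exact Or.inl ⟨h0, h⟩
    · exact Or.inr ⟨h0, h⟩
  have hBO : B.ncard ≤ O.ncard := by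
    rcases B.eq_empty_or_nonempty with hBe | ⟨z0, hz0⟩
    · simp [hBe]
    · set N : ℤ := z0.1 ^ 2 + z0.2 ^ 2 with hNdef
      have hNr : (N : ℝ) = r ^ 2 := by
        have := hz0.2
        push_cast [hNdef]
        rw [← this, Real.sq_sqrt (by positivity)]
      have hr1 : 1 < r := by
        obtain ⟨w, hw0, hwlt⟩ := hne
        have h01 : w.1 ≠ 0 ∨ w.2 ≠ 0 := by
          by_contra hcon
          push_neg at hcon
          exact hw0 (by rw [Prod.ext_iff]; simpa using hcon)
        have h1 : (1 : ℤ) ≤ w.1 ^ 2 + w.2 ^ 2 := by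
          rcases h01 with h | h
          · nlinarith [Int.one_le_abs h, sq_abs w.1, abs_nonneg w.1, sq_nonneg w.2]
          · nlinarith [Int.one_le_abs h, sq_abs w.2, abs_nonneg w.2, sq_nonneg w.1]
        have h1' : (1 : ℝ) ≤ (w.1 : ℝ) ^ 2 + (w.2 : ℝ) ^ 2 := by exact_mod_cast h1
        have h2 : (1 : ℝ) ≤ Real.sqrt ((w.1 : ℝ) ^ 2 + (w.2 : ℝ) ^ 2) := by
          rw [show (1 : ℝ) = Real.sqrt 1 by simp]
          exact Real.sqrt_le_sqrt h1'
        exact lt_of_le_of_lt h2 hwlt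
      have hN2 : 2 ≤ N := by
        have h1 : (1 : ℝ) < (N : ℝ) := by rw [hNr]; nlinarith
        have : (1 : ℤ) < N := by exact_mod_cast h1
        omega
      have hBcirc : ∀ z ∈ B, z.1 ^ 2 + z.2 ^ 2 = N := by
        intro z hz
        have hx : (z.1 : ℝ) ^ 2 + (z.2 : ℝ) ^ 2 = r ^ 2 := by
          rw [← hz.2, Real.sq_sqrt (by positivity)]
        have : ((z.1 ^ 2 + z.2 ^ 2 : ℤ) : ℝ) = (N : ℝ) := by
          push_cast
          rw [hx, ← hNr]
        exact_mod_cast this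
      apply Set.ncard_le_ncard_of_injOn Fm ?_ ?_ hOfin
      · intro z hz
        have hzc := hBcirc z hz
        refine ⟨Fm_ne_zero hN2 hzc, ?_⟩
        rw [Real.sqrt_lt' hr]
        have hlt := Fm_norm_lt hN2 hzc
        have : (((Fm z).1 ^ 2 + (Fm z).2 ^ 2 : ℤ) : ℝ) < (N : ℝ) := by exact_mod_cast hlt
        push_cast at this
        linarith [this, hNr.le, hNr.ge]
      · intro z hz w hw h
        exact Fm_inj hN2 (hBcirc z hz) (hBcirc w hw) h
  calc C.ncard ≤ (O ∪ B).ncard := Set.ncard_le_ncard hCsub (hOfin.union hBfin)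
    _ ≤ O.ncard + B.ncard := Set.ncard_union_le O B
    _ ≤ O.ncard + O.ncard := by omega
    _ = 2 * O.ncard := by ring
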